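/- Suppose ξ ∈ ℝⁿ satisfies the Bethe-type equations e^{2i(m+1)ξ_j} = ((1-q₀e^{iξ_j})/(e^{iξ_j}-q₀))((1-q₁e^{iξ_j})/(e^{iξ_j}-q₁)) Π_{k≠j} ((1-qe^{i(ξ_j+ξ_k)})/(e^{i(ξ_j+ξ_k)}-q))((1-qe^{i(ξ_j-ξ_k)})/(e^{i(ξ_j-ξ_k)}-q)) for j=1,…,n. If μ ∈ ℤⁿ with μ₁ = m+1, then P_{b;μ}(ξ;q,q₀) = q₁ · P_{b;μ-e₁}(ξ;q,q₀). -/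

import Mathlib

noncomputable def Cb (n : ℕ) (q q0 : ℝ) (ξ : Fin n → ℝ) : ℂ :=
  (∏ j : Fin n,
      (1 - (q0 : ℂ) * Complex.exp (-Complex.I * ((ξ j : ℝ) : ℂ))) /
        (1 - Complex.exp (-2 * Complex.I * ((ξ j : ℝ) : ℂ)))) *
    ∏ p ∈ Finset.univ.filter (fun p : Fin n × Fin n => p.1 < p.2),
      ((1 - (q : ℂ) * Complex.exp (-Complex.I * ((ξ p.1 - ξ p.2 : ℝ) : ℂ))) /
          (1 - Complex.exp (-Complex.I * ((ξ p.1 - ξ p.2 : ℝ) : ℂ)))) *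
        ((1 - (q : ℂ) * Complex.exp (-Complex.I * ((ξ p.1 + ξ p.2 : ℝ) : ℂ))) /
          (1 - Complex.exp (-Complex.I * ((ξ p.1 + ξ p.2 : ℝ) : ℂ))))

/-- Hyperoctahedral Hall-Littlewood polynomial: sum over signed permutations. -/
noncomputable def HLb (n : ℕ) (q q0 : ℝ) (μ : Fin n → ℤ) (ξ : Fin n → ℝ) : ℂ :=
  ∑ σ : Equiv.Perm (Fin n), ∑ ε : Fin n → Bool,
    Cb n q q0 (fun j => (if ε j then 1 else -1) * ξ (σ j)) *
      Complex.exp (Complex.I *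
        ∑ j, (((if ε j then (1 : ℝ) else -1) * ξ (σ j) : ℝ) : ℂ) * ((μ j : ℤ) : ℂ))

namespace HLB
noncomputable def E (t : ℝ) : ℂ := Complex.exp (Complex.I * (t : ℂ))

noncomputable def cA (q0 : ℝ) (x : ℂ) : ℂ := (1 - (q0 : ℂ) * x⁻¹) / (1 - (x ^ 2)⁻¹)

noncomputable def cP (q : ℝ) (x y : ℂ) : ℂ :=
  ((1 - (q : ℂ) * (x⁻¹ * y)) / (1 - x⁻¹ * y)) * ((1 - (q : ℂ) * (x⁻¹ * y⁻¹)) / (1 - x⁻¹ * y⁻¹))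

lemma exp_neg_I (t : ℝ) : Complex.exp (-Complex.I * (t : ℂ)) = (E t)⁻¹ := by
  rw [E, ← Complex.exp_neg]
  congr 1
  ring

lemma exp_neg_2I (t : ℝ) : Complex.exp (-2 * Complex.I * (t : ℂ)) = ((E t) ^ 2)⁻¹ := by
  rw [E, sq, ← Complex.exp_add, ← Complex.exp_neg]
  congr 1
  ring

lemma exp_neg_sub (a b : ℝ) :
    Complex.exp (-Complex.I * ((a - b : ℝ) : ℂ)) = (E a)⁻¹ * E b := by
  rw [E, E, ← Complex.exp_neg, ← Complex.exp_add]
  congr 1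
  push_cast
  ring

lemma exp_neg_add (a b : ℝ) :
    Complex.exp (-Complex.I * ((a + b : ℝ) : ℂ)) = (E a)⁻¹ * (E b)⁻¹ := by
  rw [E, E, ← Complex.exp_neg, ← Complex.exp_neg, ← Complex.exp_add]
  congr 1
  push_cast
  ring

lemma Cb_eq (n : ℕ) (q q0 : ℝ) (z : Fin n → ℝ) :
    Cb n q q0 z = (∏ j : Fin n, cA q0 (E (z j))) *
      ∏ p ∈ Finset.univ.filter (fun p : Fin n × Fin n => p.1 < p.2),
        cP q (E (z p.1)) (E (z p.2)) := by
  unfold Cb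
  congr 1
  · exact Finset.prod_congr rfl fun j _ => by rw [cA, exp_neg_I, exp_neg_2I]
  · exact Finset.prod_congr rfl fun p _ => by rw [cP, exp_neg_sub, exp_neg_add]

lemma lt_j0_iff {n : ℕ} (hn : 0 < n) (k : Fin n) : (⟨0, hn⟩ : Fin n) < k ↔ k ≠ ⟨0, hn⟩ := by
  rw [Fin.lt_def, Ne, Fin.ext_iff]
  simp [Nat.pos_iff_ne_zero]

lemma Cb_split (n : ℕ) (hn : 0 < n) (q q0 : ℝ) (z : Fin n → ℝ) :
    Cb n q q0 z =
      (cA q0 (E (z ⟨0, hn⟩)) *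
          ∏ k ∈ Finset.univ.erase ⟨0, hn⟩, cP q (E (z ⟨0, hn⟩)) (E (z k))) *
        ((∏ j ∈ Finset.univ.erase ⟨0, hn⟩, cA q0 (E (z j))) *
          ∏ p ∈ (Finset.univ.filter fun p : Fin n × Fin n => p.1 < p.2).filter
              (fun p => ¬ p.1 = (⟨0, hn⟩ : Fin n)),
            cP q (E (z p.1)) (E (z p.2))) := by
  classical
  rw [Cb_eq]
  set j0 : Fin n := ⟨0, hn⟩ with hj0
  rw [← Finset.mul_prod_erase Finset.univ _ (Finset.mem_univ j0)]
  rw [← Finset.prod_filter_mul_prod_filter_not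
      (Finset.univ.filter fun p : Fin n × Fin n => p.1 < p.2) (fun p => p.1 = j0)]
  have hA : ∏ p ∈ (Finset.univ.filter fun p : Fin n × Fin n => p.1 < p.2).filter
      (fun p => p.1 = j0), cP q (E (z p.1)) (E (z p.2))
      = ∏ k ∈ Finset.univ.erase j0, cP q (E (z j0)) (E (z k)) := by
    refine Finset.prod_bij' (fun p _ => p.2) (fun k _ => (j0, k)) ?_ ?_ ?_ ?_ ?_
    · intro p hp
      simp only [Finset.mem_filter, Finset.mem_univ, true_and] at hp
      simp only [Finset.mem_erase, Finset.mem_univ, and_true]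
      rw [← hp.2] at *
      exact fun h => absurd (h ▸ hp.1) (lt_irrefl _)
    · intro k hk
      simp only [Finset.mem_erase, Finset.mem_univ, and_true] at hk
      simp only [Finset.mem_filter, Finset.mem_univ, true_and]
      exact ⟨(lt_j0_iff hn k).mpr hk, trivial⟩
    · intro p hp
      simp only [Finset.mem_filter, Finset.mem_univ, true_and] at hp
      exact Prod.ext hp.2.symm rfl
    · intro k hk
      rfl
    · intro p hp
      simp only [Finset.mem_filter, Finset.mem_univ, true_and] at hp
      rw [hp.2]
  rw [hA]
  ring


lemma E_neg (t : ℝ) : E (-t) = (E t)⁻¹ := by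
  rw [E, E, ← Complex.exp_neg]
  push_cast
  ring_nf

lemma exp_head (t : ℝ) (c : ℕ) :
    Complex.exp (Complex.I * (((t : ℝ) : ℂ) * (c : ℂ))) = E t ^ c := by
  rw [E, ← Complex.exp_nat_mul]
  congr 1
  ring

lemma exp_head_neg (t : ℝ) (c : ℕ) :
    Complex.exp (Complex.I * (((-t : ℝ) : ℂ) * (c : ℂ))) = (E t ^ c)⁻¹ := by
  rw [E, ← Complex.exp_nat_mul, ← Complex.exp_neg]
  congr 1
  push_cast
  ring

lemma pair_step (n : ℕ) (hn : 0 < n) (m : ℕ) (q q0 q1 : ℝ) (μ : Fin n → ℤ)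
    (z z' : Fin n → ℝ)
    (hz' : ∀ j : Fin n, j ≠ ⟨0, hn⟩ → z' j = z j) (hz0 : z' ⟨0, hn⟩ = -(z ⟨0, hn⟩))
    (hμ0 : μ ⟨0, hn⟩ = (m : ℤ) + 1)
    (K : (cA q0 (E (z ⟨0, hn⟩)) *
            ∏ k ∈ Finset.univ.erase ⟨0, hn⟩, cP q (E (z ⟨0, hn⟩)) (E (z k))) *
          (E (z ⟨0, hn⟩) ^ m * (E (z ⟨0, hn⟩) - (q1 : ℂ)))
        + (cA q0 (E (z ⟨0, hn⟩))⁻¹ *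
            ∏ k ∈ Finset.univ.erase ⟨0, hn⟩, cP q (E (z ⟨0, hn⟩))⁻¹ (E (z k))) *
          ((E (z ⟨0, hn⟩) ^ m)⁻¹ * ((E (z ⟨0, hn⟩))⁻¹ - (q1 : ℂ))) = 0) :
    (Cb n q q0 z *
        Complex.exp (Complex.I * ∑ j, ((z j : ℝ) : ℂ) * ((μ j : ℤ) : ℂ)) -
      (q1 : ℂ) * (Cb n q q0 z *
        Complex.exp (Complex.I * ∑ j,
          ((z j : ℝ) : ℂ) * (((if j = ⟨0, hn⟩ then μ j - 1 else μ j : ℤ)) : ℂ))))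
    + (Cb n q q0 z' *
        Complex.exp (Complex.I * ∑ j, ((z' j : ℝ) : ℂ) * ((μ j : ℤ) : ℂ)) -
      (q1 : ℂ) * (Cb n q q0 z' *
        Complex.exp (Complex.I * ∑ j,
          ((z' j : ℝ) : ℂ) * (((if j = ⟨0, hn⟩ then μ j - 1 else μ j : ℤ)) : ℂ)))) = 0 := by
  classical
  set j0 : Fin n := ⟨0, hn⟩ with hj0
  set v : ℂ := E (z j0) with hv
  set P : ℂ := ∏ k ∈ Finset.univ.erase j0, cP q v (E (z k)) with hP
  set P' : ℂ := ∏ k ∈ Finset.univ.erase j0, cP q v⁻¹ (E (z k)) with hP'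
  set Rest : ℂ := (∏ j ∈ Finset.univ.erase j0, cA q0 (E (z j))) *
      ∏ p ∈ (Finset.univ.filter fun p : Fin n × Fin n => p.1 < p.2).filter
          (fun p => ¬ p.1 = j0), cP q (E (z p.1)) (E (z p.2)) with hRest
  -- Cb splits
  have hCb : Cb n q q0 z = (cA q0 v * P) * Rest := Cb_split n hn q q0 z
  have hp2ne : ∀ p : Fin n × Fin n,
      p ∈ (Finset.univ.filter fun p : Fin n × Fin n => p.1 < p.2).filter
          (fun p => ¬ p.1 = j0) → p.1 ≠ j0 ∧ p.2 ≠ j0 := by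
    intro p hp
    simp only [Finset.mem_filter, Finset.mem_univ, true_and] at hp
    refine ⟨hp.2, fun h => ?_⟩
    have := hp.1
    rw [h] at this
    rw [hj0, Fin.lt_def] at this
    exact absurd this (Nat.not_lt_zero _)
  have hCb' : Cb n q q0 z' = (cA q0 v⁻¹ * P') * Rest := by
    rw [Cb_split n hn q q0 z']
    have e0 : E (z' j0) = v⁻¹ := by rw [hz0, E_neg]
    congr 1
    · rw [e0]
      congr 1
      refine Finset.prod_congr rfl fun k hk => ?_
      rw [hz' k (Finset.mem_erase.mp hk).1]
    · rw [hRest]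
      congr 1
      · refine Finset.prod_congr rfl fun k hk => ?_
        rw [hz' k (Finset.mem_erase.mp hk).1]
      · refine Finset.prod_congr rfl fun p hp => ?_
        rw [hz' p.1 (hp2ne p hp).1, hz' p.2 (hp2ne p hp).2]
  -- sum splitting
  have hsum : ∀ (w : Fin n → ℝ) (ν : Fin n → ℤ),
      (∑ j, ((w j : ℝ) : ℂ) * ((ν j : ℤ) : ℂ))
        = ((w j0 : ℝ) : ℂ) * ((ν j0 : ℤ) : ℂ)
          + ∑ j ∈ Finset.univ.erase j0, ((w j : ℝ) : ℂ) * ((ν j : ℤ) : ℂ) :=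
    fun w ν => (Finset.add_sum_erase Finset.univ _ (Finset.mem_univ j0)).symm
  set R : ℂ := ∑ j ∈ Finset.univ.erase j0, ((z j : ℝ) : ℂ) * ((μ j : ℤ) : ℂ) with hR
  set eR : ℂ := Complex.exp (Complex.I * R) with heR
  have hRz' : ∑ j ∈ Finset.univ.erase j0, ((z' j : ℝ) : ℂ) * ((μ j : ℤ) : ℂ) = R := by
    rw [hR]
    exact Finset.sum_congr rfl fun j hj => by rw [hz' j (Finset.mem_erase.mp hj).1]
  have hRmu : ∀ w : Fin n → ℝ, (∀ j : Fin n, j ≠ j0 → w j = z j) →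
      ∑ j ∈ Finset.univ.erase j0,
        ((w j : ℝ) : ℂ) * (((if j = j0 then μ j - 1 else μ j : ℤ)) : ℂ) = R := by
    intro w hw
    rw [hR]
    refine Finset.sum_congr rfl fun j hj => ?_
    have hj' := (Finset.mem_erase.mp hj).1
    rw [hw j hj', if_neg hj']
  -- head exponentials
  have hmu0' : (if j0 = j0 then μ j0 - 1 else μ j0) = (m : ℤ) := by
    rw [if_pos rfl, hμ0]; ring
  have he1 : Complex.exp (Complex.I * (((z j0 : ℝ) : ℂ) * ((μ j0 : ℤ) : ℂ))) = v ^ (m + 1) := by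
    rw [hμ0, hv]
    rw [show (((m : ℤ) + 1 : ℤ) : ℂ) = ((m + 1 : ℕ) : ℂ) by push_cast; ring]
    exact exp_head _ _
  have he2 : Complex.exp (Complex.I * (((z j0 : ℝ) : ℂ) *
      (((if j0 = j0 then μ j0 - 1 else μ j0 : ℤ)) : ℂ))) = v ^ m := by
    rw [hmu0', hv, show ((m : ℤ) : ℂ) = ((m : ℕ) : ℂ) by push_cast; ring]
    exact exp_head _ _
  have he3 : Complex.exp (Complex.I * (((z' j0 : ℝ) : ℂ) * ((μ j0 : ℤ) : ℂ)))
      = (v ^ (m + 1))⁻¹ := by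
    rw [hμ0, hz0, hv]
    rw [show (((m : ℤ) + 1 : ℤ) : ℂ) = ((m + 1 : ℕ) : ℂ) by push_cast; ring]
    exact exp_head_neg _ _
  have he4 : Complex.exp (Complex.I * (((z' j0 : ℝ) : ℂ) *
      (((if j0 = j0 then μ j0 - 1 else μ j0 : ℤ)) : ℂ))) = (v ^ m)⁻¹ := by
    rw [hmu0', hz0, hv, show ((m : ℤ) : ℂ) = ((m : ℕ) : ℂ) by push_cast; ring]
    exact exp_head_neg _ _
  -- the four terms
  have T1 : Complex.exp (Complex.I * ∑ j, ((z j : ℝ) : ℂ) * ((μ j : ℤ) : ℂ))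
      = v ^ (m + 1) * eR := by
    rw [hsum z μ, mul_add, Complex.exp_add, he1, heR, hR]
  have T2 : Complex.exp (Complex.I * ∑ j,
        ((z j : ℝ) : ℂ) * (((if j = j0 then μ j - 1 else μ j : ℤ)) : ℂ))
      = v ^ m * eR := by
    rw [hsum z _, mul_add, Complex.exp_add, he2, heR,
      hRmu z (fun j _ => rfl)]
  have T3 : Complex.exp (Complex.I * ∑ j, ((z' j : ℝ) : ℂ) * ((μ j : ℤ) : ℂ))
      = (v ^ (m + 1))⁻¹ * eR := by
    rw [hsum z' μ, mul_add, Complex.exp_add, he3, heR, hRz']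
  have T4 : Complex.exp (Complex.I * ∑ j,
        ((z' j : ℝ) : ℂ) * (((if j = j0 then μ j - 1 else μ j : ℤ)) : ℂ))
      = (v ^ m)⁻¹ * eR := by
    rw [hsum z' _, mul_add, Complex.exp_add, he4, heR, hRmu z' hz']
  rw [hCb, hCb', T1, T2, T3, T4]
  linear_combination (Rest * eR) * K


lemma E_ne_zero (t : ℝ) : E t ≠ 0 := Complex.exp_ne_zero _
lemma abs_E (t : ℝ) : ‖E t‖ = 1 := by
  rw [E, Complex.norm_exp]; simp
lemma unit_sub_ne {x : ℂ} (hx : ‖x‖ = 1) {r : ℝ} (h1 : -1 < r) (h2 : r < 1) :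
    x - (r : ℂ) ≠ 0 := by
  intro h
  have hxr : x = (r : ℂ) := sub_eq_zero.mp h
  rw [hxr, Complex.norm_real, Real.norm_eq_abs] at hx
  have := abs_lt.mpr ⟨h1, h2⟩
  linarith

lemma one_sub_unit_ne {x : ℂ} (hx : ‖x‖ = 1) {r : ℝ} (h1 : -1 < r) (h2 : r < 1) :
    1 - (r : ℂ) * x ≠ 0 := by
  intro h
  have h' : (r : ℂ) * x = 1 := by linear_combination -h
  have habs : |r| * 1 = 1 := by
    have := congrArg (‖·‖) h'
    rwa [norm_mul, Complex.norm_real, Real.norm_eq_abs, hx, norm_one] at this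
  have := abs_lt.mpr ⟨h1, h2⟩
  linarith

def starEq (q q0 q1 : ℝ) (m : ℕ) {ι : Type*} (S : Finset ι) (v : ℂ) (w : ι → ℂ) : Prop :=
  v ^ m * v ^ m * v ^ 2 * ((v - (q0 : ℂ)) * (v - (q1 : ℂ))) *
      ∏ k ∈ S, ((v - (q : ℂ) * w k) * (v * w k - (q : ℂ)))
    = (1 - (q0 : ℂ) * v) * (1 - (q1 : ℂ) * v) *
      ∏ k ∈ S, ((1 - (q : ℂ) * v * w k) * (w k - (q : ℂ) * v))

lemma star_inv_w {q q0 q1 : ℝ} {m : ℕ} {ι : Type*} {S : Finset ι} {v : ℂ} {w w' : ι → ℂ}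
    (hw : ∀ k ∈ S, w k ≠ 0) (hw' : ∀ k ∈ S, w' k = w k ∨ w' k = (w k)⁻¹)
    (h : starEq q q0 q1 m S v w) : starEq q q0 q1 m S v w' := by
  classical
  unfold starEq at h ⊢
  set c : ι → ℂ := fun k => if w' k = w k then 1 else ((w k)⁻¹) ^ 2 with hc
  have H1 : ∏ k ∈ S, ((v - (q : ℂ) * w' k) * (v * w' k - (q : ℂ)))
      = (∏ k ∈ S, c k) * ∏ k ∈ S, ((v - (q : ℂ) * w k) * (v * w k - (q : ℂ))) := by
    rw [← Finset.prod_mul_distrib]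
    refine Finset.prod_congr rfl fun k hk => ?_
    rcases eq_or_ne (w' k) (w k) with h' | h'
    · simp [hc, h']
    · have hwk := hw k hk
      have hinv : w' k = (w k)⁻¹ := (hw' k hk).resolve_left h'
      simp only [hc, if_neg h', hinv]
      field_simp
  have H2 : ∏ k ∈ S, ((1 - (q : ℂ) * v * w' k) * (w' k - (q : ℂ) * v))
      = (∏ k ∈ S, c k) * ∏ k ∈ S, ((1 - (q : ℂ) * v * w k) * (w k - (q : ℂ) * v)) := by
    rw [← Finset.prod_mul_distrib]
    refine Finset.prod_congr rfl fun k hk => ?_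
    rcases eq_or_ne (w' k) (w k) with h' | h'
    · simp [hc, h']
    · have hwk := hw k hk
      have hinv : w' k = (w k)⁻¹ := (hw' k hk).resolve_left h'
      simp only [hc, if_neg h', hinv]
      field_simp
  rw [H1, H2]
  linear_combination (∏ k ∈ S, c k) * h

lemma star_inv_v {q q0 q1 : ℝ} {m : ℕ} {ι : Type*} {S : Finset ι} {v : ℂ} {w : ι → ℂ}
    (hv : v ≠ 0) (h : starEq q q0 q1 m S v w) : starEq q q0 q1 m S v⁻¹ w := by
  classical
  unfold starEq at h ⊢
  have H1 : ∏ k ∈ S, ((v⁻¹ - (q : ℂ) * w k) * (v⁻¹ * w k - (q : ℂ)))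
      = ((v⁻¹) ^ 2) ^ S.card * ∏ k ∈ S, ((1 - (q : ℂ) * v * w k) * (w k - (q : ℂ) * v)) := by
    rw [← Finset.prod_const, ← Finset.prod_mul_distrib]
    refine Finset.prod_congr rfl fun k hk => ?_
    field_simp
  have H2 : ∏ k ∈ S, ((1 - (q : ℂ) * v⁻¹ * w k) * (w k - (q : ℂ) * v⁻¹))
      = ((v⁻¹) ^ 2) ^ S.card * ∏ k ∈ S, ((v - (q : ℂ) * w k) * (v * w k - (q : ℂ))) := by
    rw [← Finset.prod_const, ← Finset.prod_mul_distrib]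
    refine Finset.prod_congr rfl fun k hk => ?_
    field_simp
  rw [H1, H2]
  set c := (v : ℂ)⁻¹ with hcdef
  have hc : c * v = 1 := inv_mul_cancel₀ hv
  have hcm : c ^ m * v ^ m = 1 := by rw [← mul_pow, hc, one_pow]
  have g1 : (c - (q0 : ℂ)) = c * (1 - (q0 : ℂ) * v) := by linear_combination (q0 : ℂ) * hc
  have g2 : (c - (q1 : ℂ)) = c * (1 - (q1 : ℂ) * v) := by linear_combination (q1 : ℂ) * hc
  have g3 : (1 - (q0 : ℂ) * c) = c * (v - (q0 : ℂ)) := by linear_combination -hc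
  have g4 : (1 - (q1 : ℂ) * c) = c * (v - (q1 : ℂ)) := by linear_combination -hc
  rw [g1, g2, g3, g4]
  set s := S.card
  set P1 := ∏ k ∈ S, ((v - (q : ℂ) * w k) * (v * w k - (q : ℂ))) with hP1
  set P2 := ∏ k ∈ S, ((1 - (q : ℂ) * v * w k) * (w k - (q : ℂ) * v)) with hP2
  linear_combination (-(c^m*c^m*c^2*c^2*(c^2)^s)) * h
    + (c^2*(c^2)^s*(v-(q0:ℂ))*(v-(q1:ℂ))*P1*(c^m*v^m)^2*(c*v+1)) * hc
    + (c^2*(c^2)^s*(v-(q0:ℂ))*(v-(q1:ℂ))*P1*(c^m*v^m+1)) * hcm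
lemma key (q q0 q1 : ℝ) (m : ℕ) {ι : Type*} (S : Finset ι) (v : ℂ) (w : ι → ℂ)
    (hv : v ≠ 0) (hv2 : v ^ 2 ≠ 1)
    (hw0 : ∀ k ∈ S, w k ≠ 0) (hvw : ∀ k ∈ S, v ≠ w k) (hvw1 : ∀ k ∈ S, v * w k ≠ 1)
    (hB : starEq q q0 q1 m S v w) :
    (cA q0 v * ∏ k ∈ S, cP q v (w k)) * (v ^ m * (v - (q1 : ℂ)))
      + (cA q0 v⁻¹ * ∏ k ∈ S, cP q v⁻¹ (w k)) * ((v ^ m)⁻¹ * (v⁻¹ - (q1 : ℂ))) = 0 := by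
  have hv2' : (v : ℂ) ^ 2 - 1 ≠ 0 := sub_ne_zero.mpr hv2
  have hv2'' : (1 : ℂ) - v ^ 2 ≠ 0 := fun h => hv2' (by linear_combination -h)
  have hdf : ∀ k ∈ S, (v - w k) * (v * w k - 1) ≠ 0 := fun k hk =>
    mul_ne_zero (sub_ne_zero.mpr (hvw k hk)) (sub_ne_zero.mpr (hvw1 k hk))
  have hA1 : cA q0 v = v * (v - (q0 : ℂ)) / (v ^ 2 - 1) := by
    unfold cA
    have hd : (1 : ℂ) - (v ^ 2)⁻¹ ≠ 0 := by
      rw [sub_ne_zero]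
      intro h
      exact hv2 (by rw [← inv_inv (v^2), ← h, inv_one])
    rw [div_eq_div_iff hd hv2']
    field_simp
  have hA2 : cA q0 v⁻¹ = (1 - (q0 : ℂ) * v) / (1 - v ^ 2) := by
    unfold cA
    rw [inv_inv, inv_pow, inv_inv]
  have hP1 : ∀ k ∈ S, cP q v (w k)
      = ((v - (q : ℂ) * w k) * (v * w k - (q : ℂ))) / ((v - w k) * (v * w k - 1)) := by
    intro k hk
    unfold cP
    have hwk := hw0 k hk
    have hd1 : (1 : ℂ) - v⁻¹ * w k ≠ 0 := by
      rw [sub_ne_zero]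
      intro h
      exact hvw k hk (by field_simp at h; linear_combination h)
    have hd2 : (1 : ℂ) - v⁻¹ * (w k)⁻¹ ≠ 0 := by
      rw [sub_ne_zero]
      intro h
      apply hvw1 k hk
      have := congrArg (fun z => z * (v * w k)) h
      field_simp at this
      linear_combination this
    rw [div_mul_div_comm, div_eq_div_iff (mul_ne_zero hd1 hd2) (hdf k hk)]
    field_simp
    try ring
  have hP2 : ∀ k ∈ S, cP q v⁻¹ (w k)
      = ((1 - (q : ℂ) * v * w k) * (w k - (q : ℂ) * v)) / ((v - w k) * (v * w k - 1)) := by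
    intro k hk
    unfold cP
    have hwk := hw0 k hk
    rw [inv_inv]
    have hd1 : (1 : ℂ) - v * w k ≠ 0 := by
      rw [sub_ne_zero]; exact fun h => hvw1 k hk h.symm
    have hd2 : (1 : ℂ) - v * (w k)⁻¹ ≠ 0 := by
      rw [sub_ne_zero]
      intro h
      exact hvw k hk (by field_simp at h; exact h.symm)
    rw [div_mul_div_comm, div_eq_div_iff (mul_ne_zero hd1 hd2) (hdf k hk)]
    field_simp
    try ring
  rw [hA1, hA2, Finset.prod_congr rfl hP1, Finset.prod_congr rfl hP2,
    Finset.prod_div_distrib, Finset.prod_div_distrib]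
  set P1 := ∏ k ∈ S, ((v - (q : ℂ) * w k) * (v * w k - (q : ℂ))) with hP1'
  set P2 := ∏ k ∈ S, ((1 - (q : ℂ) * v * w k) * (w k - (q : ℂ) * v)) with hP2'
  set D := ∏ k ∈ S, ((v - w k) * (v * w k - 1)) with hD'
  have hD : D ≠ 0 := Finset.prod_ne_zero_iff.mpr hdf
  have hvm : (v : ℂ) ^ m ≠ 0 := pow_ne_zero _ hv
  unfold starEq at hB
  rw [← hP1', ← hP2'] at hB
  field_simp
  linear_combination (1 - v ^ 2) * hB
lemma exp_I_add (a b : ℝ) : Complex.exp (Complex.I * ((a + b : ℝ) : ℂ)) = E a * E b := by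
  rw [E, E, ← Complex.exp_add]; congr 1; push_cast; ring

lemma exp_I_sub (a b : ℝ) :
    Complex.exp (Complex.I * ((a - b : ℝ) : ℂ)) = E a * (E b)⁻¹ := by
  rw [E, E, ← Complex.exp_neg, ← Complex.exp_add]; congr 1; push_cast; ring

lemma exp_I_m (mq : ℕ) (t : ℝ) :
    Complex.exp (2 * Complex.I * ((mq : ℂ) + 1) * (t : ℂ))
      = E t ^ mq * E t ^ mq * E t ^ 2 := by
  rw [E, ← Complex.exp_nat_mul, ← Complex.exp_nat_mul,
    ← Complex.exp_add, ← Complex.exp_add]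
  congr 1
  push_cast
  ring

lemma bethe_star (n : ℕ) (m : ℕ) (q q0 q1 : ℝ) (hq : -1 < q) (hq' : q < 1)
    (hq0 : -1 < q0) (hq0' : q0 < 1) (hq1 : -1 < q1) (hq1' : q1 < 1)
    (ξ : Fin n → ℝ) (j : Fin n)
    (hB : Complex.exp (2 * Complex.I * ((m : ℂ) + 1) * ((ξ j : ℝ) : ℂ)) =
        ((1 - (q0 : ℂ) * Complex.exp (Complex.I * ((ξ j : ℝ) : ℂ))) /
            (Complex.exp (Complex.I * ((ξ j : ℝ) : ℂ)) - (q0 : ℂ))) *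
          ((1 - (q1 : ℂ) * Complex.exp (Complex.I * ((ξ j : ℝ) : ℂ))) /
            (Complex.exp (Complex.I * ((ξ j : ℝ) : ℂ)) - (q1 : ℂ))) *
          ∏ k ∈ Finset.univ.erase j,
            ((1 - (q : ℂ) * Complex.exp (Complex.I * ((ξ j + ξ k : ℝ) : ℂ))) /
                (Complex.exp (Complex.I * ((ξ j + ξ k : ℝ) : ℂ)) - (q : ℂ))) *
              ((1 - (q : ℂ) * Complex.exp (Complex.I * ((ξ j - ξ k : ℝ) : ℂ))) /
                (Complex.exp (Complex.I * ((ξ j - ξ k : ℝ) : ℂ)) - (q : ℂ)))) :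
    starEq q q0 q1 m (Finset.univ.erase j) (E (ξ j)) (fun k => E (ξ k)) := by
  classical
  have hEj : Complex.exp (Complex.I * ((ξ j : ℝ) : ℂ)) = E (ξ j) := rfl
  rw [exp_I_m] at hB
  rw [hEj] at hB
  have hadd : ∀ k, Complex.exp (Complex.I * ((ξ j + ξ k : ℝ) : ℂ)) = E (ξ j) * E (ξ k) :=
    fun k => exp_I_add _ _
  have hsub : ∀ k, Complex.exp (Complex.I * ((ξ j - ξ k : ℝ) : ℂ)) = E (ξ j) * (E (ξ k))⁻¹ :=
    fun k => exp_I_sub _ _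
  simp only [hadd, hsub] at hB
  set v := E (ξ j) with hv
  -- combine the pair fractions
  rw [Finset.prod_congr rfl (fun k (_ : k ∈ Finset.univ.erase j) => div_mul_div_comm
      (1 - (q : ℂ) * (v * E (ξ k))) (v * E (ξ k) - (q : ℂ))
      (1 - (q : ℂ) * (v * (E (ξ k))⁻¹)) (v * (E (ξ k))⁻¹ - (q : ℂ))),
    Finset.prod_div_distrib, div_mul_div_comm, div_mul_div_comm] at hB
  have habsv : ‖v‖ = 1 := abs_E _
  have hd0 : v - (q0 : ℂ) ≠ 0 := unit_sub_ne habsv hq0 hq0'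
  have hd1 : v - (q1 : ℂ) ≠ 0 := unit_sub_ne habsv hq1 hq1'
  have hdk : ∀ k ∈ Finset.univ.erase j,
      (v * E (ξ k) - (q : ℂ)) * (v * (E (ξ k))⁻¹ - (q : ℂ)) ≠ 0 := by
    intro k _
    have h1 : ‖v * E (ξ k)‖ = 1 := by
      rw [norm_mul, habsv, abs_E, one_mul]
    have h2 : ‖v * (E (ξ k))⁻¹‖ = 1 := by
      rw [norm_mul, norm_inv, habsv, abs_E, one_mul, inv_one]
    exact mul_ne_zero (unit_sub_ne h1 hq hq') (unit_sub_ne h2 hq hq')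
  have hden : (v - (q0 : ℂ)) * (v - (q1 : ℂ)) *
      ∏ k ∈ Finset.univ.erase j,
        ((v * E (ξ k) - (q : ℂ)) * (v * (E (ξ k))⁻¹ - (q : ℂ))) ≠ 0 :=
    mul_ne_zero (mul_ne_zero hd0 hd1) (Finset.prod_ne_zero_iff.mpr hdk)
  rw [eq_div_iff hden] at hB
  unfold starEq
  have hwk : ∀ k ∈ Finset.univ.erase j, E (ξ k) ≠ 0 := fun k _ => E_ne_zero _
  have tL : ∏ k ∈ Finset.univ.erase j, ((v - (q : ℂ) * E (ξ k)) * (v * E (ξ k) - (q : ℂ)))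
      = (∏ k ∈ Finset.univ.erase j, E (ξ k)) *
        ∏ k ∈ Finset.univ.erase j,
          ((v * E (ξ k) - (q : ℂ)) * (v * (E (ξ k))⁻¹ - (q : ℂ))) := by
    rw [← Finset.prod_mul_distrib]
    refine Finset.prod_congr rfl fun k hk => ?_
    have hInv : E (ξ k) * (E (ξ k))⁻¹ = 1 := mul_inv_cancel₀ (hwk k hk)
    linear_combination (-(v * (v * E (ξ k) - (q : ℂ)))) * hInv
  have tR : ∏ k ∈ Finset.univ.erase j, ((1 - (q : ℂ) * v * E (ξ k)) * (E (ξ k) - (q : ℂ) * v))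
      = (∏ k ∈ Finset.univ.erase j, E (ξ k)) *
        ∏ k ∈ Finset.univ.erase j,
          ((1 - (q : ℂ) * (v * E (ξ k))) * (1 - (q : ℂ) * (v * (E (ξ k))⁻¹))) := by
    rw [← Finset.prod_mul_distrib]
    refine Finset.prod_congr rfl fun k hk => ?_
    have hInv : E (ξ k) * (E (ξ k))⁻¹ = 1 := mul_inv_cancel₀ (hwk k hk)
    linear_combination ((q : ℂ) * v * (1 - (q : ℂ) * v * E (ξ k))) * hInv
  rw [tL, tR]
  linear_combination (∏ k ∈ Finset.univ.erase j, E (ξ k)) * hB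

lemma star_reindex {n : ℕ} {q q0 q1 : ℝ} {m : ℕ} (σ : Equiv.Perm (Fin n)) (j0 : Fin n)
    {v : ℂ} {w : Fin n → ℂ}
    (h : starEq q q0 q1 m (Finset.univ.erase (σ j0)) v w) :
    starEq q q0 q1 m (Finset.univ.erase j0) v (fun k => w (σ k)) := by
  classical
  unfold starEq at h ⊢
  have hre : ∀ g : Fin n → ℂ,
      ∏ k ∈ Finset.univ.erase (σ j0), g k = ∏ k ∈ Finset.univ.erase j0, g (σ k) := by
    intro g
    refine Finset.prod_bij' (fun k _ => σ⁻¹ k) (fun k _ => σ k) ?_ ?_ ?_ ?_ ?_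
    · intro k hk
      simp only [Finset.mem_erase, Finset.mem_univ, and_true] at hk ⊢
      intro hcon
      exact hk (by rw [← hcon]; simp)
    · intro k hk
      simp only [Finset.mem_erase, Finset.mem_univ, and_true] at hk ⊢
      exact fun hcon => hk (σ.injective hcon)
    · intro k _; simp
    · intro k _; simp
    · intro k _; simp
  rw [hre (fun k => (v - (q : ℂ) * w k) * (v * w k - (q : ℂ))),
    hre (fun k => (1 - (q : ℂ) * v * w k) * (w k - (q : ℂ) * v))] at h
  exact h


end HLB

theorem HL_affine_straightening_typeB (n : ℕ) (hn : 0 < n) (m : ℕ) (hm : 0 < m)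
    (q q0 q1 : ℝ) (hq : -1 < q) (hq' : q < 1) (hq0 : -1 < q0) (hq0' : q0 < 1)
    (hq1 : -1 < q1) (hq1' : q1 < 1)
    (ξ : Fin n → ℝ)
    (hgen1 : ∀ j : Fin n, Complex.exp (2 * Complex.I * ((ξ j : ℝ) : ℂ)) ≠ 1)
    (hgen2 : ∀ l k : Fin n, l ≠ k →
      Complex.exp (Complex.I * ((ξ l - ξ k : ℝ) : ℂ)) ≠ 1 ∧
        Complex.exp (Complex.I * ((ξ l + ξ k : ℝ) : ℂ)) ≠ 1)
    (hBethe : ∀ j : Fin n,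
      Complex.exp (2 * Complex.I * ((m : ℂ) + 1) * ((ξ j : ℝ) : ℂ)) =
        ((1 - (q0 : ℂ) * Complex.exp (Complex.I * ((ξ j : ℝ) : ℂ))) /
            (Complex.exp (Complex.I * ((ξ j : ℝ) : ℂ)) - (q0 : ℂ))) *
          ((1 - (q1 : ℂ) * Complex.exp (Complex.I * ((ξ j : ℝ) : ℂ))) /
            (Complex.exp (Complex.I * ((ξ j : ℝ) : ℂ)) - (q1 : ℂ))) *
          ∏ k ∈ Finset.univ.erase j,
            ((1 - (q : ℂ) * Complex.exp (Complex.I * ((ξ j + ξ k : ℝ) : ℂ))) /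
                (Complex.exp (Complex.I * ((ξ j + ξ k : ℝ) : ℂ)) - (q : ℂ))) *
              ((1 - (q : ℂ) * Complex.exp (Complex.I * ((ξ j - ξ k : ℝ) : ℂ))) /
                (Complex.exp (Complex.I * ((ξ j - ξ k : ℝ) : ℂ)) - (q : ℂ))))
    (μ : Fin n → ℤ) (hμ : μ ⟨0, hn⟩ = (m : ℤ) + 1) :
    HLb n q q0 μ ξ =
      (q1 : ℂ) * HLb n q q0 (fun l => if l = ⟨0, hn⟩ then μ l - 1 else μ l) ξ := by
  classical
  set j0 : Fin n := ⟨0, hn⟩ with hj0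
  unfold HLb
  rw [Finset.mul_sum]
  refine Finset.sum_congr rfl fun σ _ => ?_
  rw [Finset.mul_sum, ← sub_eq_zero, ← Finset.sum_sub_distrib]
  have hu : ∀ (b : Bool) (x : ℝ), HLB.E ((if b then (1 : ℝ) else -1) * x)
      = if b then HLB.E x else (HLB.E x)⁻¹ := by
    intro b x
    cases b <;> simp [HLB.E_neg]
  have hne1 : ∀ x : ℂ, x ≠ 0 → x ≠ 1 → x⁻¹ ≠ 1 := by
    intro x hx0 hx1 h
    exact hx1 (by rw [← inv_inv x, h, inv_one])
  refine Finset.sum_involution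
    (fun ε _ => fun j => if j = j0 then !(ε j) else ε j) ?_ ?_
    (fun ε _ => Finset.mem_univ _) ?_
  · -- the pairing identity
    intro ε _
    set z : Fin n → ℝ := fun j => (if ε j then (1 : ℝ) else -1) * ξ (σ j) with hz
    set z' : Fin n → ℝ :=
      fun j => (if (if j = j0 then !(ε j) else ε j) then (1 : ℝ) else -1) * ξ (σ j) with hz'
    have hz'ne : ∀ j : Fin n, j ≠ j0 → z' j = z j := by
      intro j hj
      simp only [hz', hz, if_neg hj]
    have hz'0 : z' j0 = -(z j0) := by
      simp only [hz', hz, if_pos rfl]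
      cases hε : ε j0 <;> simp
    -- the key identity K
    have hEz : ∀ j : Fin n, HLB.E (z j) = if ε j then HLB.E (ξ (σ j)) else (HLB.E (ξ (σ j)))⁻¹ :=
      fun j => hu (ε j) (ξ (σ j))
    have hstar : HLB.starEq q q0 q1 m (Finset.univ.erase j0) (HLB.E (z j0))
        (fun k => HLB.E (z k)) := by
      have h0 := HLB.bethe_star n m q q0 q1 hq hq' hq0 hq0' hq1 hq1' ξ (σ j0) (hBethe (σ j0))
      have h1 := HLB.star_reindex σ j0 h0
      have h2 : HLB.starEq q q0 q1 m (Finset.univ.erase j0) (HLB.E (ξ (σ j0)))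
          (fun k => HLB.E (z k)) := by
        refine HLB.star_inv_w (fun k _ => HLB.E_ne_zero _) ?_ h1
        intro k _
        rw [hEz k]
        cases hε : ε k
        · right
          rw [if_neg Bool.false_ne_true]
        · left
          rw [if_pos rfl]
      cases hε : ε j0
      · have h3 := HLB.star_inv_v (HLB.E_ne_zero (ξ (σ j0))) h2
        have hq2 : HLB.E (z j0) = (HLB.E (ξ (σ j0)))⁻¹ := by
          rw [hEz j0, hε, if_neg Bool.false_ne_true]
        rw [hq2]
        exact h3
      · have hq2 : HLB.E (z j0) = HLB.E (ξ (σ j0)) := by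
          rw [hEz j0, hε, if_pos rfl]
        rw [hq2]
        exact h2
    have hsq : ∀ t : ℝ, HLB.E t ^ 2 = Complex.exp (2 * Complex.I * (t : ℂ)) := by
      intro t
      rw [HLB.E, sq, ← Complex.exp_add]
      congr 1
      ring
    have hv2 : HLB.E (z j0) ^ 2 ≠ 1 := by
      have hbase : HLB.E (ξ (σ j0)) ^ 2 ≠ 1 := by
        rw [hsq]
        exact hgen1 (σ j0)
      rw [hEz j0]
      cases hε : ε j0
      · rw [if_neg Bool.false_ne_true, inv_pow]
        exact hne1 _ (pow_ne_zero _ (HLB.E_ne_zero _)) hbase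
      · rw [if_pos rfl]
        exact hbase
    have hgen2' : ∀ k ∈ Finset.univ.erase j0,
        (HLB.E (ξ (σ j0)) * (HLB.E (ξ (σ k)))⁻¹ ≠ 1 ∧ HLB.E (ξ (σ j0)) * HLB.E (ξ (σ k)) ≠ 1) := by
      intro k hk
      have hkj : σ j0 ≠ σ k := fun h =>
        (Finset.mem_erase.mp hk).1 (σ.injective h).symm
      obtain ⟨g1, g2⟩ := hgen2 (σ j0) (σ k) hkj
      rw [HLB.exp_I_sub] at g1
      rw [HLB.exp_I_add] at g2
      exact ⟨g1, g2⟩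
    have hvw1 : ∀ k ∈ Finset.univ.erase j0, HLB.E (z j0) * HLB.E (z k) ≠ 1 := by
      intro k hk
      obtain ⟨g1, g2⟩ := hgen2' k hk
      have g1' : (HLB.E (ξ (σ j0)))⁻¹ * HLB.E (ξ (σ k)) ≠ 1 := by
        intro h
        apply hne1 _ (mul_ne_zero (HLB.E_ne_zero _) (inv_ne_zero (HLB.E_ne_zero _))) g1
        rw [mul_inv, inv_inv]
        exact h
      have g2' : (HLB.E (ξ (σ j0)))⁻¹ * (HLB.E (ξ (σ k)))⁻¹ ≠ 1 := by
        intro h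
        apply hne1 _ (mul_ne_zero (HLB.E_ne_zero _) (HLB.E_ne_zero _)) g2
        rw [mul_inv]
        exact h
      rw [hEz j0, hEz k]
      cases hε1 : ε j0 <;> cases hε2 : ε k
      · rw [if_neg Bool.false_ne_true, if_neg Bool.false_ne_true]
        exact g2'
      · rw [if_neg Bool.false_ne_true, if_pos rfl]
        exact g1'
      · rw [if_pos rfl, if_neg Bool.false_ne_true]
        exact g1
      · rw [if_pos rfl, if_pos rfl]
        exact g2
    have hvw : ∀ k ∈ Finset.univ.erase j0, HLB.E (z j0) ≠ HLB.E (z k) := by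
      intro k hk
      obtain ⟨g1, g2⟩ := hgen2' k hk
      rw [hEz j0, hEz k]
      cases hε1 : ε j0 <;> cases hε2 : ε k
      · rw [if_neg Bool.false_ne_true, if_neg Bool.false_ne_true]
        intro h
        apply g1
        rw [inv_injective h]
        exact mul_inv_cancel₀ (HLB.E_ne_zero _)
      · rw [if_neg Bool.false_ne_true, if_pos rfl]
        intro h
        apply g2
        rw [← h]
        exact mul_inv_cancel₀ (HLB.E_ne_zero _)
      · rw [if_pos rfl, if_neg Bool.false_ne_true]
        intro h
        apply g2
        rw [h]
        exact inv_mul_cancel₀ (HLB.E_ne_zero _)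
      · rw [if_pos rfl, if_pos rfl]
        intro h
        apply g1
        rw [h]
        exact mul_inv_cancel₀ (HLB.E_ne_zero _)
    have K := HLB.key q q0 q1 m (Finset.univ.erase j0) (HLB.E (z j0))
      (fun k => HLB.E (z k)) (HLB.E_ne_zero _) hv2 (fun k _ => HLB.E_ne_zero _)
      hvw hvw1 hstar
    exact HLB.pair_step n hn m q q0 q1 μ z z' hz'ne hz'0 hμ K
  · -- flip ε ≠ ε
    intro ε _ _ hcon
    have := congrFun hcon j0
    simp at this
  · -- involutive
    intro ε _
    funext j
    by_cases h : j = j0 <;> simp [h]
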